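/- (Performance difference via advantage) For a finite MDP and two policies π, π', the difference in discounted returns satisfies J^{π'} - J^π = (1/(1-γ)) · E_{s ∼ ρ^{π'}, a ∼ π'(s)}[A^π(s,a)], where ρ^{π'} is the normalized discounted state-occupancy distribution of π' and A^π(s,a) = Q^π(s,a) - V^π(s) is the advantage function. -/

import Mathlib

open Finset
noncomputable section

/-- Performance difference lemma: the gap in discounted returns between two
stochastic policies equals the normalized-occupancy-weighted expected advantage. -/
theorem performance_difference {S A : Type*} [Fintype S] [Fintype A]
    (r : S → A → ℝ) (P : S → A → S → ℝ) (ρ₀ : S → ℝ) (γ : ℝ)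
    (hγ : 0 ≤ γ) (hγ1 : γ < 1)
    (hP : ∀ s a, (∀ s', 0 ≤ P s a s') ∧ ∑ s', P s a s' = 1)
    (hρ₀ : ∀ s, 0 ≤ ρ₀ s) (hρ₀sum : ∑ s, ρ₀ s = 1)
    (π π' : S → A → ℝ)
    (hπ : ∀ s, (∀ a, 0 ≤ π s a) ∧ ∑ a, π s a = 1)
    (hπ' : ∀ s, (∀ a, 0 ≤ π' s a) ∧ ∑ a, π' s a = 1)
    -- value and action-value functions of π and π'
    (Vπ Vπ' : S → ℝ) (Qπ : S → A → ℝ)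
    (hQπ : ∀ s a, Qπ s a = r s a + γ * ∑ s', P s a s' * Vπ s')
    (hVπ : ∀ s, Vπ s = ∑ a, π s a * Qπ s a)
    (hVπ' : ∀ s, Vπ' s = ∑ a, π' s a *
      (r s a + γ * ∑ s', P s a s' * Vπ' s'))
    -- state-distribution iterates of π' and its normalized discounted occupancy
    (μ : ℕ → S → ℝ) (hμ0 : ∀ s, μ 0 s = ρ₀ s)
    (hμ : ∀ t s', μ (t + 1) s' = ∑ s, ∑ a, μ t s * π' s a * P s a s')
    (ρ : S → ℝ) (hρ : ∀ s, ρ s = (1 - γ) * ∑' t : ℕ, γ ^ t * μ t s) :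
    (∑ s, ρ₀ s * Vπ' s) - (∑ s, ρ₀ s * Vπ s) =
      (1 / (1 - γ)) * ∑ s, ρ s * ∑ a, π' s a * (Qπ s a - Vπ s) := by
  set g : S → ℝ := fun s => ∑ a, π' s a * (Qπ s a - Vπ s) with hg
  set D : S → ℝ := fun s => Vπ' s - Vπ s with hD
  set F : ℕ → ℝ := fun t => ∑ s, μ t s * g s with hF
  -- Bellman difference identity
  have key : ∀ s, D s = g s + γ * ∑ s', (∑ a, π' s a * P s a s') * D s' := by
    intro s
    have hswap : ∀ f : S → ℝ, ∑ s', (∑ a, π' s a * P s a s') * f s'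
        = ∑ a, π' s a * ∑ s', P s a s' * f s' := by
      intro f
      simp_rw [Finset.sum_mul, mul_assoc]
      rw [Finset.sum_comm]
      simp_rw [← Finset.mul_sum]
    have h1 : (∑ a, π' s a * Vπ s) = Vπ s := by
      rw [← Finset.sum_mul, (hπ' s).2, one_mul]
    have hPsub : ∀ a, ∑ s', P s a s' * D s'
        = (∑ s', P s a s' * Vπ' s') - ∑ s', P s a s' * Vπ s' := by
      intro a
      rw [← Finset.sum_sub_distrib]
      exact Finset.sum_congr rfl fun s' _ => by rw [hD]; ring
    show Vπ' s - Vπ s = _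
    rw [hg, hVπ' s, hswap]
    simp_rw [hPsub]
    have hL : ∑ a, π' s a * (r s a + γ * ∑ s', P s a s' * Vπ' s')
        = (∑ a, π' s a * r s a) + γ * ∑ a, π' s a * ∑ s', P s a s' * Vπ' s' := by
      rw [Finset.mul_sum, ← Finset.sum_add_distrib]
      exact Finset.sum_congr rfl fun a _ => by ring
    have hQ : ∑ a, π' s a * (Qπ s a - Vπ s)
        = (∑ a, π' s a * r s a) + γ * (∑ a, π' s a * ∑ s', P s a s' * Vπ s') - Vπ s := by
      calc ∑ a, π' s a * (Qπ s a - Vπ s)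
          = ∑ a, (π' s a * r s a + γ * (π' s a * ∑ s', P s a s' * Vπ s')
              - π' s a * Vπ s) :=
            Finset.sum_congr rfl fun a _ => by rw [hQπ]; ring
        _ = _ := by
            rw [Finset.sum_sub_distrib, Finset.sum_add_distrib, ← Finset.mul_sum, h1]
    have hA : ∑ a, π' s a * ((∑ s', P s a s' * Vπ' s') - ∑ s', P s a s' * Vπ s')
        = (∑ a, π' s a * ∑ s', P s a s' * Vπ' s')
          - ∑ a, π' s a * ∑ s', P s a s' * Vπ s' := by
      rw [← Finset.sum_sub_distrib]
      exact Finset.sum_congr rfl fun a _ => by ring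
    rw [hL, hQ, hA]
    ring
  -- μ t is a probability distribution
  have hμnn : ∀ t s, 0 ≤ μ t s := by
    intro t
    induction t with
    | zero => intro s; rw [hμ0]; exact hρ₀ s
    | succ t ih =>
      intro s'
      rw [hμ t s']
      refine Finset.sum_nonneg fun s _ => Finset.sum_nonneg fun a _ => ?_
      exact mul_nonneg (mul_nonneg (ih s) ((hπ' s).1 a)) ((hP s a).1 s')
  have hμsum : ∀ t, ∑ s, μ t s = 1 := by
    intro t
    induction t with
    | zero => simp [hμ0, hρ₀sum]
    | succ t ih =>
      simp_rw [hμ t]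
      rw [Finset.sum_comm]
      have h2 : ∀ s, ∑ s', ∑ a, μ t s * π' s a * P s a s' = μ t s := by
        intro s
        rw [Finset.sum_comm]
        have h3 : ∀ a, ∑ s', μ t s * π' s a * P s a s' = μ t s * π' s a := by
          intro a
          rw [← Finset.mul_sum, (hP s a).2, mul_one]
        simp_rw [h3]
        rw [← Finset.mul_sum, (hπ' s).2, mul_one]
      simp_rw [h2]
      exact ih
  have hμle : ∀ t s, μ t s ≤ 1 := by
    intro t s
    calc μ t s ≤ ∑ s', μ t s' :=
          Finset.single_le_sum (fun s' _ => hμnn t s') (Finset.mem_univ s)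
      _ = 1 := hμsum t
  -- telescoping identity
  have step : ∀ N, ∑ s, ρ₀ s * D s
      = (∑ t ∈ Finset.range N, γ ^ t * F t) + γ ^ N * ∑ s, μ N s * D s := by
    intro N
    induction N with
    | zero => simp [hμ0]
    | succ N ih =>
      rw [ih, Finset.sum_range_succ]
      have h2 : ∑ s, μ N s * D s = F N + γ * ∑ s', μ (N + 1) s' * D s' := by
        have hexp : ∑ s', μ (N + 1) s' * D s'
            = ∑ s, μ N s * ∑ s', (∑ a, π' s a * P s a s') * D s' := by
          simp_rw [hμ N, Finset.sum_mul]
          rw [Finset.sum_comm]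
          refine Finset.sum_congr rfl fun s _ => ?_
          rw [Finset.mul_sum]
          refine Finset.sum_congr rfl fun s' _ => ?_
          rw [Finset.mul_sum]
          exact Finset.sum_congr rfl fun a _ => by ring
        rw [hexp]
        calc ∑ s, μ N s * D s
            = ∑ s, μ N s * (g s + γ * ∑ s', (∑ a, π' s a * P s a s') * D s') := by
              exact Finset.sum_congr rfl fun s _ => by rw [← key]
          _ = F N + γ * ∑ s, μ N s * ∑ s', (∑ a, π' s a * P s a s') * D s' := by
              simp_rw [mul_add, Finset.sum_add_distrib]
              congr 1
              rw [Finset.mul_sum]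
              exact Finset.sum_congr rfl fun s _ => by ring
      rw [h2]; ring
  -- summability
  set M : ℝ := ∑ s, |g s| with hM
  have hFbound : ∀ t, |F t| ≤ M := by
    intro t
    calc |F t| ≤ ∑ s, |μ t s * g s| := Finset.abs_sum_le_sum_abs _ _
      _ ≤ ∑ s, |g s| := by
          refine Finset.sum_le_sum fun s _ => ?_
          rw [abs_mul, abs_of_nonneg (hμnn t s)]
          calc μ t s * |g s| ≤ 1 * |g s| :=
                mul_le_mul_of_nonneg_right (hμle t s) (abs_nonneg _)
            _ = |g s| := one_mul _
  have hgeo : Summable (fun t : ℕ => γ ^ t) := summable_geometric_of_lt_one hγ hγ1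
  have hsumF : Summable (fun t : ℕ => γ ^ t * F t) := by
    refine Summable.of_norm_bounded (g := fun t => M * γ ^ t) (hgeo.mul_left M) fun t => ?_
    rw [Real.norm_eq_abs, abs_mul, abs_of_nonneg (pow_nonneg hγ t), mul_comm]
    exact mul_le_mul_of_nonneg_right (hFbound t) (pow_nonneg hγ t)
  -- LHS = tsum
  set T : ℝ := ∑' t : ℕ, γ ^ t * F t with hT
  have hLHS : ∑ s, ρ₀ s * D s = T := by
    have h1 : Filter.Tendsto (fun N => ∑ t ∈ Finset.range N, γ ^ t * F t)
        Filter.atTop (nhds T) := hsumF.hasSum.tendsto_sum_nat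
    have h2 : Filter.Tendsto (fun N => γ ^ N * ∑ s, μ N s * D s)
        Filter.atTop (nhds 0) := by
      have hb : ∀ N, ‖γ ^ N * ∑ s, μ N s * D s‖ ≤ (∑ s, |D s|) * γ ^ N := by
        intro N
        rw [Real.norm_eq_abs, abs_mul, abs_of_nonneg (pow_nonneg hγ N), mul_comm]
        refine mul_le_mul_of_nonneg_right ?_ (pow_nonneg hγ N)
        calc |∑ s, μ N s * D s| ≤ ∑ s, |μ N s * D s| := Finset.abs_sum_le_sum_abs _ _
          _ ≤ ∑ s, |D s| := by
              refine Finset.sum_le_sum fun s _ => ?_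
              rw [abs_mul, abs_of_nonneg (hμnn N s)]
              calc μ N s * |D s| ≤ 1 * |D s| :=
                    mul_le_mul_of_nonneg_right (hμle N s) (abs_nonneg _)
                _ = |D s| := one_mul _
      have h0 : Filter.Tendsto (fun N : ℕ => (∑ s, |D s|) * γ ^ N)
          Filter.atTop (nhds 0) := by
        have := tendsto_pow_atTop_nhds_zero_of_lt_one hγ hγ1
        simpa using this.const_mul (∑ s, |D s|)
      exact squeeze_zero_norm hb h0
    have h3 : Filter.Tendsto (fun N => (∑ t ∈ Finset.range N, γ ^ t * F t)
        + γ ^ N * ∑ s, μ N s * D s) Filter.atTop (nhds (T + 0)) := h1.add h2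
    rw [add_zero] at h3
    have h4 : Filter.Tendsto (fun _ : ℕ => ∑ s, ρ₀ s * D s) Filter.atTop
        (nhds (∑ s, ρ₀ s * D s)) := tendsto_const_nhds
    refine tendsto_nhds_unique ?_ h3
    convert h4 using 1
    funext N
    exact (step N).symm
  -- RHS = tsum
  have hγne : (1 : ℝ) - γ ≠ 0 := by linarith
  have hsums : ∀ s, Summable (fun t : ℕ => γ ^ t * μ t s * g s) := by
    intro s
    refine Summable.of_norm_bounded (g := fun t => |g s| * γ ^ t) (hgeo.mul_left _) fun t => ?_
    rw [Real.norm_eq_abs, abs_mul, abs_mul, abs_of_nonneg (pow_nonneg hγ t),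
      abs_of_nonneg (hμnn t s), mul_comm _ (|g s|)]
    refine mul_le_mul_of_nonneg_left ?_ (abs_nonneg _)
    calc γ ^ t * μ t s ≤ γ ^ t * 1 :=
          mul_le_mul_of_nonneg_left (hμle t s) (pow_nonneg hγ t)
      _ = γ ^ t := mul_one _
  have hRHS : ∑ s, ρ s * g s = (1 - γ) * T := by
    have h1 : ∀ s, ρ s * g s = (1 - γ) * ∑' t : ℕ, γ ^ t * μ t s * g s := by
      intro s
      rw [hρ s, mul_assoc]
      congr 1
      rw [← tsum_mul_right]
    rw [Finset.sum_congr rfl fun s _ => h1 s, ← Finset.mul_sum]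
    congr 1
    rw [← Summable.tsum_finsetSum (fun s _ => hsums s)]
    refine tsum_congr fun t => ?_
    rw [hF, Finset.mul_sum]
    exact Finset.sum_congr rfl fun s _ => by ring
  calc (∑ s, ρ₀ s * Vπ' s) - (∑ s, ρ₀ s * Vπ s)
      = ∑ s, ρ₀ s * D s := by
        rw [← Finset.sum_sub_distrib]
        exact Finset.sum_congr rfl fun s _ => by rw [hD]; ring
    _ = T := hLHS
    _ = (1 / (1 - γ)) * ∑ s, ρ s * g s := by
        rw [hRHS]; field_simp
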